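/- Let A be a unital C*-algebra and a invertible up to (p,q) for projections p, q. Then there exists a projection p' ∈ A equivalent to p such that a is invertible up to (p', q) and (1-q) a p' = 0. -/

import Mathlib

open scoped NNReal

section Aux

variable {A : Type*} [CStarAlgebra A]

private lemma commute_of_mem_elemental' {c m y : A} (hy : y ∈ StarAlgebra.elemental ℂ m)
    (h1 : Commute c m) (h2 : Commute c (star m)) : Commute c y := by
  induction hy using StarAlgebra.elemental.induction_on with
  | self => exact h1
  | star_self => exact h2
  | algebraMap r => exact (Algebra.commutes r c).symm
  | add u hu v hv Hu Hv => exact Hu.add_right Hv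
  | mul u hu v hv Hu Hv => exact Hu.mul_right Hv
  | closure s hs H v hv =>
      exact closure_minimal (fun u hu => H u hu)
        (isClosed_eq (continuous_const.mul continuous_id) (continuous_id.mul continuous_const)) hv

private lemma cfc_complex_mem_elemental' (f : ℂ → ℂ) (m : A) (hm : IsStarNormal m) :
    cfc f m ∈ StarAlgebra.elemental ℂ m := by
  by_cases hf : ContinuousOn f (spectrum ℂ m)
  · rw [cfc_apply f m, cfcHom_eq_of_isStarNormal]
    exact ((continuousFunctionalCalculus m) _).2
  · rw [cfc_apply_of_not_continuousOn m hf]; exact zero_mem _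

private lemma commute_sqrt' [PartialOrder A] [StarOrderedRing A] {c m : A} (hm : 0 ≤ m)
    (h : Commute c m) : Commute c (CFC.sqrt m) := by
  have hsa : IsSelfAdjoint m := .of_nonneg hm
  have key : CFC.sqrt m = cfc (fun x : ℂ => ((NNReal.sqrt x.re.toNNReal : ℝ) : ℂ)) m := by
    rw [CFC.sqrt_eq_cfc, cfc_nnreal_eq_real _ _ hm, cfc_real_eq_complex _ hsa]
  rw [key]
  exact commute_of_mem_elemental' (cfc_complex_mem_elemental' _ m hsa.isStarNormal) h
    (by rwa [hsa.star_eq])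

end Aux

/-- A projection in a C*-algebra: a self-adjoint idempotent. -/
def IsProjection {A : Type*} [Ring A] [StarRing A] (p : A) : Prop :=
  star p = p ∧ p * p = p

/-- `b` is a `(p,q)`-inverse of `a`. -/
def IsPQInv {A : Type*} [Ring A] (a p q b : A) : Prop :=
  b = (1 - p) * b * (1 - q) ∧ (1 - q) * a * (1 - p) * b = 1 - q ∧
    b * ((1 - q) * a * (1 - p)) = 1 - p

/-- `a` is invertible up to `(p,q)`. -/
def InvUpTo {A : Type*} [Ring A] (a p q : A) : Prop := ∃ b, IsPQInv a p q b

/-- Triangularization: if `a` is invertible up to `(p,q)`, there is a projection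
`p' ∼ p` such that `a` is invertible up to `(p',q)` and `(1-q) a p' = 0`. -/
theorem triangularization_right
    {A : Type*} [NormedRing A] [StarRing A] [CStarRing A] [CompleteSpace A]
    [NormedAlgebra ℂ A] [StarModule ℂ A]
    (a p q : A) (hp : IsProjection p) (hq : IsProjection q)
    (h : InvUpTo a p q) :
    ∃ p' : A, IsProjection p' ∧ (∃ v : A, v * star v = p ∧ star v * v = p') ∧
      InvUpTo a p' q ∧ (1 - q) * a * p' = 0 := by
  letI : CStarAlgebra A :=
    { ‹NormedRing A›, ‹StarRing A›, ‹CStarRing A›, ‹CompleteSpace A›, ‹NormedAlgebra ℂ A›,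
      ‹StarModule ℂ A› with }
  letI : PartialOrder A := CStarAlgebra.spectralOrder A
  haveI : StarOrderedRing A := CStarAlgebra.spectralOrderedRing A
  obtain ⟨hps, hp2⟩ := hp
  obtain ⟨hqs, hq2⟩ := hq
  obtain ⟨b, hb1, hb2, hb3⟩ := h
  -- basic annihilation facts
  have hpb : p * b = 0 := by
    calc p * b = p * ((1 - p) * b * (1 - q)) := by rw [← hb1]
      _ = (p - p * p) * (b * (1 - q)) := by noncomm_ring
      _ = 0 := by rw [hp2, sub_self, zero_mul]
  have hbq : b * q = 0 := by
    calc b * q = ((1 - p) * b * (1 - q)) * q := by rw [← hb1]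
      _ = ((1 - p) * b) * (q - q * q) := by noncomm_ring
      _ = 0 := by rw [hq2, sub_self, mul_zero]
  have hcb : (1 - q) * a * b = 1 - q := by
    calc (1 - q) * a * b
        = (1 - q) * a * (1 - p) * b + ((1 - q) * a) * (p * b) := by noncomm_ring
      _ = 1 - q := by rw [hb2, hpb, mul_zero, add_zero]
  -- the idempotent e
  set e : A := 1 - b * ((1 - q) * a) with he_def
  have hep : e * p = e := by
    calc e * p = p - (b * ((1 - q) * a) - b * ((1 - q) * a * (1 - p))) := by
          rw [he_def]; noncomm_ring
      _ = p - (b * ((1 - q) * a) - (1 - p)) := by rw [hb3]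
      _ = e := by rw [he_def]; noncomm_ring
  have hpe : p * e = p := by
    calc p * e = p - (p * b) * ((1 - q) * a) := by rw [he_def]; noncomm_ring
      _ = p := by rw [hpb, zero_mul, sub_zero]
  have hce : (1 - q) * a * e = 0 := by
    calc (1 - q) * a * e
        = (1 - q) * a - ((1 - q) * a * b) * ((1 - q) * a) := by rw [he_def]; noncomm_ring
      _ = (1 - q) * a - (1 - q) * ((1 - q) * a) := by rw [hcb]
      _ = (q - q * q) * a := by noncomm_ring
      _ = 0 := by rw [hq2, sub_self, zero_mul]
  have heb : e * b = 0 := by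
    calc e * b = b - b * ((1 - q) * a * b) := by rw [he_def]; noncomm_ring
      _ = b - b * (1 - q) := by rw [hcb]
      _ = b * q := by noncomm_ring
      _ = 0 := hbq
  have hee : e * e = e := by
    calc e * e = e - (e * b) * ((1 - q) * a) := by rw [he_def]; noncomm_ring
      _ = e := by rw [heb, zero_mul, sub_zero]
  -- z and k
  set z : A := e - p with hz_def
  have he_pz : e = p + z := by rw [hz_def]; abel
  have hzp : z * p = z := by
    calc z * p = e * p - p * p := by rw [hz_def]; noncomm_ring
      _ = e - p := by rw [hep, hp2]
      _ = z := hz_def.symm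
  have hpz : p * z = 0 := by
    calc p * z = p * e - p * p := by rw [hz_def]; noncomm_ring
      _ = 0 := by rw [hpe, hp2, sub_self]
  have hpzs : p * star z = star z := by rw [← hps, ← star_mul, hzp]
  have hzsp : star z * p = 0 := by rw [← hps, ← star_mul, hpz, star_zero]
  set k : A := star z * z with hk_def
  have hpk : p * k = k := by
    calc p * k = (p * star z) * z := by rw [hk_def]; noncomm_ring
      _ = k := by rw [hpzs, hk_def]
  have hkp : k * p = k := by
    calc k * p = star z * (z * p) := by rw [hk_def]; noncomm_ring
      _ = k := by rw [hzp, hk_def]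
  have hcomm_pk : Commute p k := by rw [Commute, SemiconjBy, hpk, hkp]
  have hk0 : (0 : A) ≤ k := hk_def ▸ star_mul_self_nonneg z
  have hk10 : (0 : A) ≤ 1 + k := le_trans zero_le_one (le_add_of_nonneg_right hk0)
  have hu : IsUnit (1 + k) :=
    CStarAlgebra.isUnit_of_le 1 (le_add_of_nonneg_right hk0) isStrictlyPositive_one
  obtain ⟨u, hu_eq⟩ := hu
  have hur : (1 + k) * ↑u⁻¹ = 1 := by rw [← hu_eq]; exact u.mul_inv
  have hru : (↑u⁻¹ : A) * (1 + k) = 1 := by rw [← hu_eq]; exact u.inv_mul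
  have hcomm_pu : Commute p (↑u⁻¹ : A) := by

    have : Commute p (u : A) := by rw [hu_eq]; exact (Commute.one_right p).add_right hcomm_pk
    exact this.units_inv_right
  have h0r : (0 : A) ≤ ↑u⁻¹ := CFC.inv_nonneg_of_nonneg u (hu_eq ▸ hk10)
  have hrsa : star (↑u⁻¹ : A) = ↑u⁻¹ := (IsSelfAdjoint.of_nonneg h0r).star_eq
  -- the square root s
  set s : A := CFC.sqrt (↑u⁻¹ : A) with hs_def
  have hs0 : (0 : A) ≤ s := hs_def ▸ CFC.sqrt_nonneg _
  have hss : s * s = ↑u⁻¹ := hs_def ▸ CFC.sqrt_mul_sqrt_self _ h0r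
  have hssa : star s = s := (IsSelfAdjoint.of_nonneg hs0).star_eq
  have hcps : Commute p s := hs_def ▸ commute_sqrt' h0r hcomm_pu
  have hcomm_ku : Commute (1 + k) (↑u⁻¹ : A) := by rw [Commute, SemiconjBy, hur, hru]
  have hcks : Commute (1 + k) s := hs_def ▸ commute_sqrt' h0r hcomm_ku
  -- star e * e = p + k
  have hstar_e : star e = p + star z := by rw [he_pz, star_add, hps]
  have hese : star e * e = p + k := by
    calc star e * e = (p + star z) * (p + z) := by rw [hstar_e, ← he_pz]
      _ = p * p + p * z + (star z * p + star z * z) := by noncomm_ring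
      _ = p + k := by rw [hp2, hpz, hzsp, ← hk_def]; abel
  have h1kp : (1 + k) * p = p + k := by rw [add_mul, one_mul, hkp]
  -- the projection p' =: E
  set E : A := e * ↑u⁻¹ * star e with hE_def
  have hEs : star E = E := by
    rw [hE_def, star_mul, star_mul, star_star, hrsa, mul_assoc]
  have heE : e * E = E := by
    calc e * E = (e * e) * (↑u⁻¹ * star e) := by rw [hE_def]; noncomm_ring
      _ = E := by rw [hee, hE_def]; noncomm_ring
  have hEe : E * e = e := by
    calc E * e = e * ↑u⁻¹ * (star e * e) := by rw [hE_def]; noncomm_ring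
      _ = e * ↑u⁻¹ * ((1 + k) * p) := by rw [hese, h1kp]
      _ = e * (↑u⁻¹ * (1 + k)) * p := by noncomm_ring
      _ = e * p := by rw [hru, mul_one]
      _ = e := hep
  have hE2 : E * E = E := by
    calc E * E = e * ↑u⁻¹ * (star e * e) * (↑u⁻¹ * star e) := by rw [hE_def]; noncomm_ring
      _ = e * ↑u⁻¹ * ((1 + k) * p) * (↑u⁻¹ * star e) := by rw [hese, h1kp]
      _ = e * (↑u⁻¹ * (1 + k)) * (p * (↑u⁻¹ * star e)) := by noncomm_ring
      _ = e * (p * (↑u⁻¹ * star e)) := by rw [hru, mul_one]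
      _ = (e * p) * (↑u⁻¹ * star e) := by noncomm_ring
      _ = E := by rw [hep, hE_def]; noncomm_ring
  have hcaE : (1 - q) * a * E = 0 := by
    calc (1 - q) * a * E = ((1 - q) * a * e) * (↑u⁻¹ * star e) := by rw [hE_def]; noncomm_ring
      _ = 0 := by rw [hce, zero_mul]
  -- the partial isometry v = s * star e
  have hv1 : (s * star e) * star (s * star e) = p := by
    calc (s * star e) * star (s * star e) = s * (star e * e) * s := by
          rw [star_mul, star_star, hssa]; noncomm_ring
      _ = s * ((1 + k) * p) * s := by rw [hese, h1kp]
      _ = s * (1 + k) * (p * s) := by noncomm_ring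
      _ = s * (1 + k) * (s * p) := by rw [hcps.eq]
      _ = (s * (1 + k) * s) * p := by noncomm_ring
      _ = ((1 + k) * (s * s)) * p := by rw [← hcks.eq]; noncomm_ring
      _ = p := by rw [hss, hur, one_mul]
  have hv2 : star (s * star e) * (s * star e) = E := by
    calc star (s * star e) * (s * star e) = e * (s * s) * star e := by
          rw [star_mul, star_star, hssa]; noncomm_ring
      _ = E := by rw [hss, hE_def]
  -- invertibility up to (E, q)
  have hE1 : (1 - E) * (1 - E) = 1 - E := by
    calc (1 - E) * (1 - E) = 1 - E - E + E * E := by noncomm_ring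
      _ = 1 - E := by rw [hE2]; abel
  have hq1 : (1 - q) * (1 - q) = 1 - q := by
    calc (1 - q) * (1 - q) = 1 - q - q + q * q := by noncomm_ring
      _ = 1 - q := by rw [hq2]; abel
  have haE : (1 - q) * a * (1 - E) = (1 - q) * a := by
    rw [mul_sub, mul_one, hcaE, sub_zero]
  have hbc_e : b * ((1 - q) * a) = 1 - e := by rw [he_def, sub_sub_cancel]
  have h1e1E : (1 - e) * (1 - E) = 1 - e := by
    calc (1 - e) * (1 - E) = 1 - E - e + e * E := by noncomm_ring
      _ = 1 - e := by rw [heE]; abel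
  have h1E1e : (1 - E) * (1 - e) = 1 - E := by
    calc (1 - E) * (1 - e) = 1 - e - E + E * e := by noncomm_ring
      _ = 1 - E := by rw [hEe]; abel
  refine ⟨E, ⟨hEs, hE2⟩, ⟨s * star e, hv1, hv2⟩, ⟨(1 - E) * b * (1 - q), ?_, ?_, ?_⟩, hcaE⟩
  · calc (1 - E) * b * (1 - q)
        = ((1 - E) * (1 - E)) * (b * ((1 - q) * (1 - q))) := by rw [hE1, hq1]; noncomm_ring
      _ = (1 - E) * ((1 - E) * b * (1 - q)) * (1 - q) := by noncomm_ring
  · calc (1 - q) * a * (1 - E) * ((1 - E) * b * (1 - q))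
        = ((1 - q) * a) * ((1 - E) * (1 - E)) * (b * (1 - q)) := by noncomm_ring
      _ = (1 - q) * a * (1 - E) * (b * (1 - q)) := by rw [hE1]
      _ = ((1 - q) * a) * (b * (1 - q)) := by rw [haE]
      _ = ((1 - q) * a * b) * (1 - q) := by noncomm_ring
      _ = (1 - q) * (1 - q) := by rw [hcb]
      _ = 1 - q := hq1
  · calc ((1 - E) * b * (1 - q)) * ((1 - q) * a * (1 - E))
        = (1 - E) * b * (((1 - q) * (1 - q)) * (a * (1 - E))) := by noncomm_ring
      _ = (1 - E) * b * ((1 - q) * (a * (1 - E))) := by rw [hq1]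
      _ = (1 - E) * ((b * ((1 - q) * a)) * (1 - E)) := by noncomm_ring
      _ = (1 - E) * ((1 - e) * (1 - E)) := by rw [hbc_e]
      _ = (1 - E) * (1 - e) := by rw [h1e1E]
      _ = 1 - E := h1E1e
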